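/- Suppose the constants A^{I,αβ}_{JK} satisfy the null condition A^{I,αβ}_{JK}ξ_αξ_β=0 whenever ξ₀²−ξ₁²−ξ₂²−ξ₃²=0. Then for any N and any sufficiently smooth ℝ^M-valued functions u,v on ℝ₊×ℝ³, at every point with |x|≥1 one has |Z^{≤N}(A^{I,αβ}_{JK}∂_α u^J ∂_β v^K)| ≲ |Z^{≤N}∂̸u||Z^{≤N/2}∂v| + |Z^{≤N/2}∂̸u||Z^{≤N}∂v| + |Z^{≤N}∂u||Z^{≤N/2}∂̸v| + |Z^{≤N/2}∂u||Z^{≤N}∂̸v|, with implicit constant depending only on N and the coefficients A. -/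

import Mathlib

noncomputable section

open MeasureTheory ENNReal Set Filter

/-- Euclidean space ℝ³. -/
abbrev E3 : Type := EuclideanSpace ℝ (Fin 3)

/-- Scalar space-time fields. -/
abbrev SF := ℝ → E3 → ℝ

/-- Time derivative ∂ₜ. -/
def pt (u : SF) : SF := fun t x => deriv (fun s => u s x) t

/-- Spatial derivative ∂ᵢ. -/
def px (i : Fin 3) (u : SF) : SF := fun t x =>
  fderiv ℝ (fun y => u t y) x (EuclideanSpace.single i 1)

/-- Space-time derivatives ∂_α, α = 0,…,3, with ∂₀ = ∂ₜ. -/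
def pd (α : Fin 4) : SF → SF := ![pt, px 0, px 1, px 2] α

/-- Radial derivative ∂ᵣ = (x/r)·∇ₓ. -/
def pr (u : SF) : SF := fun t x => ∑ i, (x i / ‖x‖) * px i u t x

/-- Angular gradient ∇̸ᵢ = ∂ᵢ − (xᵢ/r)∂ᵣ. -/
def pang (i : Fin 3) (u : SF) : SF := fun t x =>
  px i u t x - (x i / ‖x‖) * pr u t x

/-- Good derivatives ∂̸ = (∂ₜ+∂ᵣ, ∇̸). -/
def gd (α : Fin 4) : SF → SF :=
  ![fun u t x => pt u t x + pr u t x, pang 0, pang 1, pang 2] α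

/-- ω = (−1, x/r). -/
def omg (α : Fin 4) (x : E3) : ℝ := ![-1, x 0 / ‖x‖, x 1 / ‖x‖, x 2 / ‖x‖] α

/-- |∂u| for a scalar field. -/
def gradAbs (u : SF) : SF := fun t x => Real.sqrt (∑ α, (pd α u t x) ^ 2)

/-- |∂̸u| for a scalar field. -/
def goodAbs (u : SF) : SF := fun t x => Real.sqrt (∑ α, (gd α u t x) ^ 2)

/-- Rotation vector fields Ω. -/
def rot (i : Fin 3) : SF → SF :=
  ![fun u t x => x 1 * px 2 u t x - x 2 * px 1 u t x,
    fun u t x => x 2 * px 0 u t x - x 0 * px 2 u t x,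
    fun u t x => x 0 * px 1 u t x - x 1 * px 0 u t x] i

/-- The admissible vector fields Z = (∂ₜ, ∂₁, ∂₂, ∂₃, Ω₁, Ω₂, Ω₃). -/
def Zop (a : Fin 7) : SF → SF := ![pt, px 0, px 1, px 2, rot 0, rot 1, rot 2] a

/-- Iterated vector fields Z^μ. -/
def Ziter : List (Fin 7) → SF → SF
  | [] => id
  | a :: l => fun u => Zop a (Ziter l u)

/-- Japanese bracket ⟨r⟩ = √(1+r²). -/
def jr (x : E3) : ℝ := Real.sqrt (1 + ‖x‖ ^ 2)

/-- The d'Alembertian □ = ∂ₜ² − Δ. -/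
def box (u : SF) : SF := fun t x => pt (pt u) t x - ∑ i, px i (px i u) t x

/-- L²ₓ norm. -/
def L2x (f : E3 → ℝ) : ℝ≥0∞ := (∫⁻ x, ENNReal.ofReal ((f x) ^ 2)) ^ (1/2 : ℝ)

/-- ∫₀^∞ ∫_{ℝ³} f dx dt. -/
def IInt (f : SF) : ℝ≥0∞ := ∫⁻ t in Ici (0:ℝ), ∫⁻ x, ENNReal.ofReal (f t x)

/-- Mixed L²ₜL²ₓ norm over [0,∞)×ℝ³. -/
def L2L2 (f : SF) : ℝ≥0∞ := (IInt (fun t x => (f t x) ^ 2)) ^ (1/2 : ℝ)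

/-- Mixed L^∞ₜL²ₓ norm over [0,∞)×ℝ³. -/
def LinfL2 (f : SF) : ℝ≥0∞ := ⨆ t ∈ Ici (0:ℝ), L2x (f t)

/-- Local energy norm ‖·‖_{LE}. -/
def LEnorm (f : SF) : ℝ≥0∞ :=
  ⨆ R ∈ Ici (1:ℝ),
    ENNReal.ofReal (R ^ (-(2:ℝ)⁻¹)) *
      (∫⁻ t in Ici (0:ℝ), ∫⁻ x in {x : E3 | R / 2 ≤ jr x ∧ jr x ≤ R},
        ENNReal.ofReal ((f t x) ^ 2)) ^ (1/2 : ℝ)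

/-- Component of a vector-valued field. -/
def comp {M : ℕ} (u : ℝ → E3 → Fin M → ℝ) (I : Fin M) : SF := fun t x => u t x I

/-- |u| for vector-valued fields. -/
def vAbs {M : ℕ} (u : ℝ → E3 → Fin M → ℝ) : SF := fun t x => ∑ I, |u t x I|

/-- |∂u| for vector-valued fields. -/
def vGradAbs {M : ℕ} (u : ℝ → E3 → Fin M → ℝ) : SF := fun t x =>
  ∑ I, gradAbs (comp u I) t x

/-- |∂̸u| for vector-valued fields. -/
def vGoodAbs {M : ℕ} (u : ℝ → E3 → Fin M → ℝ) : SF := fun t x =>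
  ∑ I, goodAbs (comp u I) t x

/-- |∂∂u| for vector-valued fields. -/
def vGrad2Abs {M : ℕ} (u : ℝ → E3 → Fin M → ℝ) : SF := fun t x =>
  ∑ I, Real.sqrt (∑ α, ∑ β, (pd α (pd β (comp u I)) t x) ^ 2)

/-- ‖u‖_{LE¹} = ‖(∂u, u/r)‖_{LE} for vector-valued fields. -/
def vLE1 {M : ℕ} (u : ℝ → E3 → Fin M → ℝ) : ℝ≥0∞ :=
  LEnorm (fun t x => vGradAbs u t x + vAbs u t x / ‖x‖)

/-- (□_h u)^I = (∂ₜ²−Δ)u^I + h^{I,αβ}_K ∂_α∂_β u^K. -/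
def boxh {M : ℕ} (h : Fin M → Fin M → Fin 4 → Fin 4 → SF)
    (u : ℝ → E3 → Fin M → ℝ) (I : Fin M) : SF := fun t x =>
  box (comp u I) t x + ∑ K, ∑ α, ∑ β, h I K α β t x * pd α (pd β (comp u K)) t x

/-- |□_h u|. -/
def vBoxhAbs {M : ℕ} (h : Fin M → Fin M → Fin 4 → Fin 4 → SF)
    (u : ℝ → E3 → Fin M → ℝ) : SF := fun t x => ∑ I, |boxh h u I t x|

/-- |h| = Σ_{I,K,α,β} |h^{I,αβ}_K|. -/
def habs {M : ℕ} (h : Fin M → Fin M → Fin 4 → Fin 4 → SF) : SF := fun t x =>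
  ∑ I, ∑ K, ∑ α, ∑ β, |h I K α β t x|

/-- |∂h|. -/
def hGradAbs {M : ℕ} (h : Fin M → Fin M → Fin 4 → Fin 4 → SF) : SF := fun t x =>
  ∑ I, ∑ K, ∑ α, ∑ β, gradAbs (h I K α β) t x

/-- |∂̸h|. -/
def hGoodAbs {M : ℕ} (h : Fin M → Fin M → Fin 4 → Fin 4 → SF) : SF := fun t x =>
  ∑ I, ∑ K, ∑ α, ∑ β, goodAbs (h I K α β) t x

/-- The contraction ω_αω_β h^{I,αβ}_K. -/
def hOmg {M : ℕ} (h : Fin M → Fin M → Fin 4 → Fin 4 → SF) (I K : Fin M) : SF :=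
  fun t x => ∑ α, ∑ β, omg α x * omg β x * h I K α β t x

/-- |∂(ω_αω_β h^{αβ})|. -/
def hOmgGradAbs {M : ℕ} (h : Fin M → Fin M → Fin 4 → Fin 4 → SF) : SF := fun t x =>
  ∑ I, ∑ K, gradAbs (hOmg h I K) t x

/-- |h^{αβ}ω_αω_β|. -/
def hOmgAbs {M : ℕ} (h : Fin M → Fin M → Fin 4 → Fin 4 → SF) : SF := fun t x =>
  ∑ I, ∑ K, |hOmg h I K t x|

/-- Symmetry h^{I,αβ}_K = h^{K,αβ}_I = h^{I,βα}_K. -/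
def hSymm {M : ℕ} (h : Fin M → Fin M → Fin 4 → Fin 4 → SF) : Prop :=
  ∀ I K α β, h I K α β = h K I α β ∧ h I K α β = h I K β α

/-- |Z^{≤N} u| (scalar). -/
def ZleAbs (N : ℕ) (u : SF) : SF := fun t x =>
  ∑ n ∈ Finset.range (N+1), ∑ μ : Fin n → Fin 7, |Ziter (List.ofFn μ) u t x|

/-- |Z^{≤N} u| (vector-valued). -/
def ZleAbsV {M : ℕ} (N : ℕ) (u : ℝ → E3 → Fin M → ℝ) : SF := fun t x =>
  ∑ n ∈ Finset.range (N+1), ∑ μ : Fin n → Fin 7, ∑ I,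
    |Ziter (List.ofFn μ) (comp u I) t x|

/-- |∂ Z^{≤N} u|. -/
def gradZleV {M : ℕ} (N : ℕ) (u : ℝ → E3 → Fin M → ℝ) : SF := fun t x =>
  ∑ n ∈ Finset.range (N+1), ∑ μ : Fin n → Fin 7, ∑ I,
    gradAbs (Ziter (List.ofFn μ) (comp u I)) t x

/-- |∂̸ Z^{≤N} u|. -/
def goodZleV {M : ℕ} (N : ℕ) (u : ℝ → E3 → Fin M → ℝ) : SF := fun t x =>
  ∑ n ∈ Finset.range (N+1), ∑ μ : Fin n → Fin 7, ∑ I,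
    goodAbs (Ziter (List.ofFn μ) (comp u I)) t x

/-- |Z^{≤N} ∂ u| (Z applied to the components of ∂u). -/
def ZgradAfter {M : ℕ} (N : ℕ) (u : ℝ → E3 → Fin M → ℝ) : SF := fun t x =>
  ∑ n ∈ Finset.range (N+1), ∑ μ : Fin n → Fin 7, ∑ I,
    Real.sqrt (∑ α, (Ziter (List.ofFn μ) (pd α (comp u I)) t x) ^ 2)

/-- |Z^{≤N} ∂̸ u| (Z applied to the components of ∂̸u). -/
def ZgoodAfter {M : ℕ} (N : ℕ) (u : ℝ → E3 → Fin M → ℝ) : SF := fun t x =>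
  ∑ n ∈ Finset.range (N+1), ∑ μ : Fin n → Fin 7, ∑ I,
    Real.sqrt (∑ α, (Ziter (List.ofFn μ) (gd α (comp u I)) t x) ^ 2)

/-- ‖Z^{≤N}u‖_{LE¹}. -/
def vZleLE1 {M : ℕ} (N : ℕ) (u : ℝ → E3 → Fin M → ℝ) : ℝ≥0∞ :=
  LEnorm (fun t x => gradZleV N u t x + ZleAbsV N u t x / ‖x‖)

/-- |□_h Z^{≤N} u|. -/
def boxhZleV {M : ℕ} (h : Fin M → Fin M → Fin 4 → Fin 4 → SF) (N : ℕ)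
    (u : ℝ → E3 → Fin M → ℝ) : SF := fun t x =>
  ∑ n ∈ Finset.range (N+1), ∑ μ : Fin n → Fin 7, ∑ I,
    |box (Ziter (List.ofFn μ) (comp u I)) t x +
      ∑ K, ∑ α, ∑ β, h I K α β t x * pd α (pd β (Ziter (List.ofFn μ) (comp u K))) t x|

/-- |Z^{≤N} h|. -/
def hZleAbs {M : ℕ} (N : ℕ) (h : Fin M → Fin M → Fin 4 → Fin 4 → SF) : SF := fun t x =>
  ∑ n ∈ Finset.range (N+1), ∑ μ : Fin n → Fin 7, ∑ I, ∑ K, ∑ α, ∑ β,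
    |Ziter (List.ofFn μ) (h I K α β) t x|

/-- |Z^{≤N} ∂̸ h|. -/
def hZleGoodAbs {M : ℕ} (N : ℕ) (h : Fin M → Fin M → Fin 4 → Fin 4 → SF) : SF := fun t x =>
  ∑ n ∈ Finset.range (N+1), ∑ μ : Fin n → Fin 7, ∑ I, ∑ K, ∑ α, ∑ β,
    Real.sqrt (∑ c, (Ziter (List.ofFn μ) (gd c (h I K α β)) t x) ^ 2)

/-- |Z^{≤N} (ω_αω_β h^{αβ})|. -/
def hOmgZleAbs {M : ℕ} (N : ℕ) (h : Fin M → Fin M → Fin 4 → Fin 4 → SF) : SF := fun t x =>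
  ∑ n ∈ Finset.range (N+1), ∑ μ : Fin n → Fin 7, ∑ I, ∑ K,
    |Ziter (List.ofFn μ) (hOmg h I K) t x|

/-- The smallness assumption (2.13) on h, with weight p̃ and bound δ. -/
def hAssumptions {M : ℕ} (h : Fin M → Fin M → Fin 4 → Fin 4 → SF) (pt' δ : ℝ) : Prop :=
  LinfL2 (hZleAbs 3 h)
    + L2L2 (fun t x => jr x ^ ((pt' - 1)/2) * hZleGoodAbs 2 h t x)
    + L2L2 (fun t x => jr x ^ ((pt' - 1)/2) * hOmgZleAbs 3 h t x)
    ≤ ENNReal.ofReal δ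

/-- Spatial derivatives on ℝ³. -/
def pxs (i : Fin 3) (f : E3 → ℝ) : E3 → ℝ := fun x =>
  fderiv ℝ f x (EuclideanSpace.single i 1)

/-- Iterated spatial derivatives ∂^μ on ℝ³. -/
def pxsIter : List (Fin 3) → (E3 → ℝ) → (E3 → ℝ)
  | [] => id
  | i :: l => fun f => pxs i (pxsIter l f)

/-- Spatial rotation vector fields on ℝ³. -/
def rotS (i : Fin 3) : (E3 → ℝ) → (E3 → ℝ) :=
  ![fun f x => x 1 * pxs 2 f x - x 2 * pxs 1 f x,
    fun f x => x 2 * pxs 0 f x - x 0 * pxs 2 f x,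
    fun f x => x 0 * pxs 1 f x - x 1 * pxs 0 f x] i

/-- Spatial admissible vector fields (∂₁,∂₂,∂₃,Ω₁,Ω₂,Ω₃) on ℝ³. -/
def ZopS (a : Fin 6) : (E3 → ℝ) → (E3 → ℝ) :=
  ![pxs 0, pxs 1, pxs 2, rotS 0, rotS 1, rotS 2] a

/-- Iterated spatial admissible vector fields. -/
def ZiterS : List (Fin 6) → (E3 → ℝ) → (E3 → ℝ)
  | [] => id
  | a :: l => fun f => ZopS a (ZiterS l f)

/-- |Z^{≤N} f| on ℝ³. -/
def ZleAbsS (N : ℕ) (f : E3 → ℝ) : E3 → ℝ := fun x =>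
  ∑ n ∈ Finset.range (N+1), ∑ μ : Fin n → Fin 6, |ZiterS (List.ofFn μ) f x|


/-! ## Part A: smoothness infrastructure -/

abbrev Sdom : Set (ℝ × E3) := {p : ℝ × E3 | p.2 ≠ 0}

lemma isOpen_Sdom : IsOpen Sdom :=
  isOpen_compl_singleton.preimage continuous_snd

/-- Smooth on the region x ≠ 0. -/
def SmOn (g : SF) : Prop := ContDiffOn ℝ (⊤ : ℕ∞) (Function.uncurry g) Sdom

lemma SmOn.diffAt {g : SF} (hg : SmOn g) {t : ℝ} {x : E3} (hx : x ≠ 0) :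
    DifferentiableAt ℝ (Function.uncurry g) (t, x) :=
  ((hg.contDiffAt (isOpen_Sdom.mem_nhds hx)).differentiableAt (by simp))

lemma SmOn.hasDerivAt_t {g : SF} (hg : SmOn g) {t : ℝ} {x : E3} (hx : x ≠ 0) :
    HasDerivAt (fun s => g s x) (fderiv ℝ (Function.uncurry g) (t, x) (1, 0)) t :=
  (hg.diffAt (t := t) hx).hasFDerivAt.comp_hasDerivAt (f := fun s : ℝ => (s, x)) t ((hasDerivAt_id t).prodMk (hasDerivAt_const t x))

lemma SmOn.diffAt_t {g : SF} (hg : SmOn g) {t : ℝ} {x : E3} (hx : x ≠ 0) :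
    DifferentiableAt ℝ (fun s => g s x) t := (hg.hasDerivAt_t hx).differentiableAt

lemma SmOn.pt_eq {g : SF} (hg : SmOn g) {t : ℝ} {x : E3} (hx : x ≠ 0) :
    pt g t x = fderiv ℝ (Function.uncurry g) (t, x) (1, 0) :=
  (hg.hasDerivAt_t hx).deriv

lemma SmOn.hasFDerivAt_x {g : SF} (hg : SmOn g) {t : ℝ} {x : E3} (hx : x ≠ 0) :
    HasFDerivAt (fun y => g t y)
      ((fderiv ℝ (Function.uncurry g) (t, x)).comp
        ((0 : E3 →L[ℝ] ℝ).prod (ContinuousLinearMap.id ℝ E3))) x :=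
  (hg.diffAt hx).hasFDerivAt.comp x ((hasFDerivAt_const t x).prodMk (hasFDerivAt_id x))

lemma SmOn.diffAt_x {g : SF} (hg : SmOn g) {t : ℝ} {x : E3} (hx : x ≠ 0) :
    DifferentiableAt ℝ (fun y => g t y) x := (hg.hasFDerivAt_x hx).differentiableAt

lemma SmOn.px_eq {g : SF} (hg : SmOn g) {t : ℝ} {x : E3} (hx : x ≠ 0) (i : Fin 3) :
    px i g t x = fderiv ℝ (Function.uncurry g) (t, x) (0, EuclideanSpace.single i 1) := by
  rw [px, (hg.hasFDerivAt_x hx).fderiv]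
  simp

lemma SmOn.pt {g : SF} (hg : SmOn g) : SmOn (pt g) := by
  have hF : ContDiffOn ℝ (⊤ : ℕ∞) (fderiv ℝ (Function.uncurry g)) Sdom :=
    hg.fderiv_of_isOpen isOpen_Sdom (by exact_mod_cast le_top)
  have h2 : ContDiffOn ℝ (⊤ : ℕ∞)
      (fun p : ℝ × E3 => fderiv ℝ (Function.uncurry g) p ((1:ℝ), (0:E3))) Sdom :=
    hF.clm_apply contDiffOn_const
  exact h2.congr (fun p hp => by
    have := hg.pt_eq (t := p.1) (x := p.2) hp
    simpa [Function.uncurry] using this)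

lemma SmOn.px {g : SF} (hg : SmOn g) (i : Fin 3) : SmOn (px i g) := by
  have hF : ContDiffOn ℝ (⊤ : ℕ∞) (fderiv ℝ (Function.uncurry g)) Sdom :=
    hg.fderiv_of_isOpen isOpen_Sdom (by exact_mod_cast le_top)
  have h2 : ContDiffOn ℝ (⊤ : ℕ∞)
      (fun p : ℝ × E3 => fderiv ℝ (Function.uncurry g) p ((0:ℝ), EuclideanSpace.single i 1)) Sdom :=
    hF.clm_apply contDiffOn_const
  exact h2.congr (fun p hp => by
    have := hg.px_eq (t := p.1) (x := p.2) hp i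
    simpa [Function.uncurry] using this)

/-! ## Part B: the coefficient class and basic smooth functions on E3 -/

lemma normsq_eq (x : E3) : ‖x‖ ^ 2 = ∑ i, x i ^ 2 := by
  rw [EuclideanSpace.norm_eq, Real.sq_sqrt (Finset.sum_nonneg fun i _ => sq_nonneg _)]
  simp [Real.norm_eq_abs, sq_abs]

lemma contDiffOn_sumsq : ContDiff ℝ (⊤ : ℕ∞) (fun x : E3 => ∑ i, x i ^ 2) :=
  ContDiff.sum fun i _ => ((EuclideanSpace.proj (𝕜 := ℝ) i).contDiff).pow 2

lemma sumsq_pos {x : E3} (hx : x ≠ 0) : 0 < ∑ i, x i ^ 2 := by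
  rw [← normsq_eq]; exact pow_pos (norm_pos_iff.2 hx) 2

lemma contDiffOn_normE3 : ContDiffOn ℝ (⊤ : ℕ∞) (fun x : E3 => ‖x‖) {x | x ≠ 0} := by
  intro x hx
  refine ContDiffAt.contDiffWithinAt ?_
  have h1 : ContDiffAt ℝ (⊤ : ℕ∞) Real.sqrt (∑ i, x i ^ 2) :=
    Real.contDiffAt_sqrt (sumsq_pos hx).ne'
  have h2 := h1.comp x (contDiffOn_sumsq.contDiffAt)
  refine h2.congr_of_eventuallyEq ?_
  filter_upwards with y
  rw [EuclideanSpace.norm_eq]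
  congr 1
  simp [Real.norm_eq_abs, sq_abs]

/-- The coefficient class: generated by constants, x i / ‖x‖, ‖x‖⁻¹. -/
inductive IsC : (E3 → ℝ) → Prop
  | const (r : ℝ) : IsC (fun _ => r)
  | omg (i : Fin 3) : IsC (fun x => x i / ‖x‖)
  | invr : IsC (fun x => ‖x‖⁻¹)
  | add {c d : E3 → ℝ} : IsC c → IsC d → IsC (fun x => c x + d x)
  | mul {c d : E3 → ℝ} : IsC c → IsC d → IsC (fun x => c x * d x)

lemma IsC.smooth {c : E3 → ℝ} (hc : IsC c) :
    ContDiffOn ℝ (⊤ : ℕ∞) c {x : E3 | x ≠ 0} := by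
  induction hc with
  | const r => exact contDiffOn_const
  | omg i =>
      exact (((EuclideanSpace.proj (𝕜 := ℝ) i).contDiff.contDiffOn)).div
        contDiffOn_normE3 (fun x hx => norm_ne_zero_iff.2 hx)
  | invr => exact contDiffOn_normE3.inv (fun x hx => norm_ne_zero_iff.2 hx)
  | add hc hd ihc ihd => exact ihc.add ihd
  | mul hc hd ihc ihd => exact ihc.mul ihd

lemma IsC.bound {c : E3 → ℝ} (hc : IsC c) :
    ∃ B : ℝ, 0 ≤ B ∧ ∀ x : E3, 1 ≤ ‖x‖ → |c x| ≤ B := by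
  induction hc with
  | const r => exact ⟨|r|, abs_nonneg _, fun x _ => le_rfl⟩
  | omg i =>
      refine ⟨1, zero_le_one, fun x hx => ?_⟩
      rw [abs_div, abs_norm]
      have hxi : |x i| ≤ ‖x‖ := by
        have h1 : x i ^ 2 ≤ ∑ j, x j ^ 2 :=
          Finset.single_le_sum (fun j _ => sq_nonneg (x j)) (Finset.mem_univ i)
        rw [← normsq_eq] at h1
        calc |x i| = Real.sqrt (x i ^ 2) := (Real.sqrt_sq_eq_abs _).symm
        _ ≤ Real.sqrt (‖x‖ ^ 2) := Real.sqrt_le_sqrt h1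
        _ = ‖x‖ := by rw [Real.sqrt_sq (norm_nonneg x)]
      exact div_le_one_of_le₀ hxi (norm_nonneg x) |>.trans le_rfl
  | invr =>
      refine ⟨1, zero_le_one, fun x hx => ?_⟩
      rw [abs_inv, abs_norm]
      exact inv_le_one_of_one_le₀ hx
  | add hc hd ihc ihd =>
      obtain ⟨B1, hB1, h1⟩ := ihc; obtain ⟨B2, hB2, h2⟩ := ihd
      exact ⟨B1 + B2, by linarith, fun x hx =>
        (abs_add_le _ _).trans (add_le_add (h1 x hx) (h2 x hx))⟩
  | mul hc hd ihc ihd =>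
      obtain ⟨B1, hB1, h1⟩ := ihc; obtain ⟨B2, hB2, h2⟩ := ihd
      refine ⟨B1 * B2, mul_nonneg hB1 hB2, fun x hx => ?_⟩
      rw [abs_mul]
      exact mul_le_mul (h1 x hx) (h2 x hx) (abs_nonneg _) hB1

lemma IsC.diffAt {c : E3 → ℝ} (hc : IsC c) {x : E3} (hx : x ≠ 0) :
    DifferentiableAt ℝ c x :=
  ((hc.smooth.contDiffAt ((isOpen_compl_singleton).mem_nhds hx)).differentiableAt
    (by simp))

/-! ## Part C: SmOn closure and derivation rules -/

lemma fin3_cases (i : Fin 3) : i = 0 ∨ i = 1 ∨ i = 2 := by revert i; decide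
lemma fin4_cases (a : Fin 4) : a = 0 ∨ a = 1 ∨ a = 2 ∨ a = 3 := by revert a; decide
lemma fin7_cases (a : Fin 7) :
    a = 0 ∨ a = 1 ∨ a = 2 ∨ a = 3 ∨ a = 4 ∨ a = 5 ∨ a = 6 := by revert a; decide

lemma rot_zero : rot 0 = fun u t x => x 1 * px 2 u t x - x 2 * px 1 u t x := rfl
lemma rot_one : rot 1 = fun u t x => x 2 * px 0 u t x - x 0 * px 2 u t x := rfl
lemma rot_two : rot 2 = fun u t x => x 0 * px 1 u t x - x 1 * px 0 u t x := rfl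

lemma Zop_0 : Zop 0 = pt := rfl
lemma Zop_1 : Zop 1 = px 0 := rfl
lemma Zop_2 : Zop 2 = px 1 := rfl
lemma Zop_3 : Zop 3 = px 2 := rfl
lemma Zop_4 : Zop 4 = rot 0 := rfl
lemma Zop_5 : Zop 5 = rot 1 := rfl
lemma Zop_6 : Zop 6 = rot 2 := rfl

lemma gd_0 : gd 0 = fun u t x => pt u t x + pr u t x := rfl
lemma gd_1 : gd 1 = pang 0 := rfl
lemma gd_2 : gd 2 = pang 1 := rfl
lemma gd_3 : gd 3 = pang 2 := rfl

lemma pd_0 : pd 0 = pt := rfl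
lemma pd_1 : pd 1 = px 0 := rfl
lemma pd_2 : pd 2 = px 1 := rfl
lemma pd_3 : pd 3 = px 2 := rfl

lemma SmOn.add {f g : SF} (hf : SmOn f) (hg : SmOn g) :
    SmOn (fun t x => f t x + g t x) := ContDiffOn.add hf hg

lemma SmOn.mul {f g : SF} (hf : SmOn f) (hg : SmOn g) :
    SmOn (fun t x => f t x * g t x) := ContDiffOn.mul hf hg

lemma SmOn.sub {f g : SF} (hf : SmOn f) (hg : SmOn g) :
    SmOn (fun t x => f t x - g t x) := ContDiffOn.sub hf hg

lemma IsC.smOn {c : E3 → ℝ} (hc : IsC c) : SmOn (fun _ x => c x) :=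
  hc.smooth.comp (contDiff_snd.contDiffOn) (fun _ hp => hp)

lemma SmOn.cmul {c : E3 → ℝ} (hc : IsC c) {g : SF} (hg : SmOn g) :
    SmOn (fun t x => c x * g t x) := (hc.smOn).mul hg

lemma SmOn.coordmul (j : Fin 3) {g : SF} (hg : SmOn g) :
    SmOn (fun t x => x j * g t x) := by
  refine ContDiffOn.mul ?_ hg
  exact ((EuclideanSpace.proj (𝕜 := ℝ) j).contDiff.comp contDiff_snd).contDiffOn

lemma SmOn.fsum {ι : Type*} {s : Finset ι} {f : ι → SF} (hf : ∀ i ∈ s, SmOn (f i)) :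
    SmOn (fun t x => ∑ i ∈ s, f i t x) := ContDiffOn.sum hf

lemma SmOn.prOp {g : SF} (hg : SmOn g) : SmOn (pr g) := by
  have : SmOn (fun t x => ∑ i : Fin 3, (x i / ‖x‖) * _root_.px i g t x) :=
    SmOn.fsum (fun i _ => SmOn.cmul (IsC.omg i) (hg.px i))
  exact this

lemma SmOn.pangOp {g : SF} (hg : SmOn g) (i : Fin 3) : SmOn (pang i g) := by
  have : SmOn (fun t x => _root_.px i g t x - (x i / ‖x‖) * _root_.pr g t x) :=
    (hg.px i).sub (SmOn.cmul (IsC.omg i) hg.prOp)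
  exact this

lemma SmOn.gdOp {g : SF} (hg : SmOn g) (a : Fin 4) : SmOn (gd a g) := by
  rcases fin4_cases a with rfl|rfl|rfl|rfl
  · exact (hg.pt.add hg.prOp : SmOn _)
  · exact hg.pangOp 0
  · exact hg.pangOp 1
  · exact hg.pangOp 2

lemma SmOn.pdOp {g : SF} (hg : SmOn g) (a : Fin 4) : SmOn (pd a g) := by
  rcases fin4_cases a with rfl|rfl|rfl|rfl
  · exact hg.pt
  · exact hg.px 0
  · exact hg.px 1
  · exact hg.px 2

lemma SmOn.rotOp {g : SF} (hg : SmOn g) (i : Fin 3) : SmOn (rot i g) := by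
  rcases fin3_cases i with rfl|rfl|rfl
  · rw [rot_zero]; exact (SmOn.coordmul 1 (hg.px 2)).sub (SmOn.coordmul 2 (hg.px 1))
  · rw [rot_one]; exact (SmOn.coordmul 2 (hg.px 0)).sub (SmOn.coordmul 0 (hg.px 2))
  · rw [rot_two]; exact (SmOn.coordmul 0 (hg.px 1)).sub (SmOn.coordmul 1 (hg.px 0))

lemma SmOn.zop {g : SF} (hg : SmOn g) (a : Fin 7) : SmOn (Zop a g) := by
  rcases fin7_cases a with rfl|rfl|rfl|rfl|rfl|rfl|rfl
  · exact hg.pt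
  · exact hg.px 0
  · exact hg.px 1
  · exact hg.px 2
  · exact hg.rotOp 0
  · exact hg.rotOp 1
  · exact hg.rotOp 2

lemma SmOn.ziter {g : SF} (hg : SmOn g) (l : List (Fin 7)) : SmOn (Ziter l g) := by
  induction l with
  | nil => exact hg
  | cons a l ih => exact ih.zop a

/-! ### Derivation (Leibniz) rules, valid at x ≠ 0 -/

lemma pt_mul {f g : SF} (hf : SmOn f) (hg : SmOn g) {t : ℝ} {x : E3} (hx : x ≠ 0) :
    pt (fun t x => f t x * g t x) t x = pt f t x * g t x + f t x * pt g t x :=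
  deriv_mul (hf.diffAt_t hx) (hg.diffAt_t hx)

lemma px_mul (i : Fin 3) {f g : SF} (hf : SmOn f) (hg : SmOn g) {t : ℝ} {x : E3}
    (hx : x ≠ 0) :
    px i (fun t x => f t x * g t x) t x = px i f t x * g t x + f t x * px i g t x := by
  have h := fderiv_fun_mul (hf.diffAt_x (t := t) hx) (hg.diffAt_x (t := t) hx)
  show fderiv ℝ (fun y => f t y * g t y) x (EuclideanSpace.single i 1) = _
  rw [h]
  simp [px]
  ring

lemma rot_mul (j : Fin 3) {f g : SF} (hf : SmOn f) (hg : SmOn g) {t : ℝ} {x : E3}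
    (hx : x ≠ 0) :
    rot j (fun t x => f t x * g t x) t x = rot j f t x * g t x + f t x * rot j g t x := by
  rcases fin3_cases j with rfl|rfl|rfl <;>
    [rw [rot_zero]; rw [rot_one]; rw [rot_two]] <;> beta_reduce <;>
    rw [px_mul _ hf hg hx, px_mul _ hf hg hx] <;> ring

lemma Zop_mul (a : Fin 7) {f g : SF} (hf : SmOn f) (hg : SmOn g) {t : ℝ} {x : E3}
    (hx : x ≠ 0) :
    Zop a (fun t x => f t x * g t x) t x = Zop a f t x * g t x + f t x * Zop a g t x := by
  rcases fin7_cases a with rfl|rfl|rfl|rfl|rfl|rfl|rfl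
  · exact pt_mul hf hg hx
  · exact px_mul 0 hf hg hx
  · exact px_mul 1 hf hg hx
  · exact px_mul 2 hf hg hx
  · exact rot_mul 0 hf hg hx
  · exact rot_mul 1 hf hg hx
  · exact rot_mul 2 hf hg hx

lemma pt_fsum {ι : Type*} {s : Finset ι} {f : ι → SF} (hf : ∀ i ∈ s, SmOn (f i))
    {t : ℝ} {x : E3} (hx : x ≠ 0) :
    pt (fun t x => ∑ i ∈ s, f i t x) t x = ∑ i ∈ s, pt (f i) t x :=
  deriv_fun_sum (fun i hi => (hf i hi).diffAt_t hx)

lemma px_fsum (j : Fin 3) {ι : Type*} {s : Finset ι} {f : ι → SF}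
    (hf : ∀ i ∈ s, SmOn (f i)) {t : ℝ} {x : E3} (hx : x ≠ 0) :
    px j (fun t x => ∑ i ∈ s, f i t x) t x = ∑ i ∈ s, px j (f i) t x := by
  show fderiv ℝ (fun y => ∑ i ∈ s, f i t y) x (EuclideanSpace.single j 1) = _
  rw [fderiv_fun_sum (fun i hi => (hf i hi).diffAt_x hx)]
  simp [px]

lemma rot_fsum (j : Fin 3) {ι : Type*} {s : Finset ι} {f : ι → SF}
    (hf : ∀ i ∈ s, SmOn (f i)) {t : ℝ} {x : E3} (hx : x ≠ 0) :
    rot j (fun t x => ∑ i ∈ s, f i t x) t x = ∑ i ∈ s, rot j (f i) t x := by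
  rcases fin3_cases j with rfl|rfl|rfl <;>
    [rw [rot_zero]; rw [rot_one]; rw [rot_two]] <;> beta_reduce <;>
    rw [px_fsum _ hf hx, px_fsum _ hf hx] <;>
    rw [Finset.mul_sum, Finset.mul_sum, ← Finset.sum_sub_distrib]

lemma Zop_fsum (a : Fin 7) {ι : Type*} {s : Finset ι} {f : ι → SF}
    (hf : ∀ i ∈ s, SmOn (f i)) {t : ℝ} {x : E3} (hx : x ≠ 0) :
    Zop a (fun t x => ∑ i ∈ s, f i t x) t x = ∑ i ∈ s, Zop a (f i) t x := by
  rcases fin7_cases a with rfl|rfl|rfl|rfl|rfl|rfl|rfl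
  · exact pt_fsum hf hx
  · exact px_fsum 0 hf hx
  · exact px_fsum 1 hf hx
  · exact px_fsum 2 hf hx
  · rw [Zop_4]; exact rot_fsum 0 hf hx
  · rw [Zop_5]; exact rot_fsum 1 hf hx
  · rw [Zop_6]; exact rot_fsum 2 hf hx

lemma px_congr (j : Fin 3) {f g : SF} (h : ∀ t (x : E3), x ≠ 0 → f t x = g t x)
    {t : ℝ} {x : E3} (hx : x ≠ 0) : px j f t x = px j g t x := by
  show fderiv ℝ (fun y => f t y) x _ = fderiv ℝ (fun y => g t y) x _
  have he : (fun y => f t y) =ᶠ[nhds x] (fun y => g t y) := by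
    filter_upwards [(isOpen_compl_singleton (x := (0 : E3))).mem_nhds hx] with y hy
    exact h t y hy
  rw [he.fderiv_eq]

lemma Zop_congr (a : Fin 7) {f g : SF} (h : ∀ t (x : E3), x ≠ 0 → f t x = g t x)
    {t : ℝ} {x : E3} (hx : x ≠ 0) : Zop a f t x = Zop a g t x := by
  have hpt : pt f t x = pt g t x := by
    show deriv (fun s => f s x) t = deriv (fun s => g s x) t
    congr 1
    exact funext fun s => h s x hx
  rcases fin7_cases a with rfl|rfl|rfl|rfl|rfl|rfl|rfl
  · exact hpt
  · exact px_congr 0 h hx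
  · exact px_congr 1 h hx
  · exact px_congr 2 h hx
  · rw [Zop_4, rot_zero]; beta_reduce; rw [px_congr 2 h hx, px_congr 1 h hx]
  · rw [Zop_5, rot_one]; beta_reduce; rw [px_congr 0 h hx, px_congr 2 h hx]
  · rw [Zop_6, rot_two]; beta_reduce; rw [px_congr 1 h hx, px_congr 0 h hx]

/-! ## Part D: derivatives of coefficient functions -/

lemma proj_single (i j : Fin 3) :
    (EuclideanSpace.proj (𝕜 := ℝ) i) (EuclideanSpace.single j (1:ℝ))
      = if i = j then (1:ℝ) else 0 := by
  show EuclideanSpace.single j (1:ℝ) i = _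
  simp [EuclideanSpace.single_apply, eq_comm]

lemma sqrt_sumsq (x : E3) : Real.sqrt (∑ i, x i ^ 2) = ‖x‖ := by
  rw [← normsq_eq, Real.sqrt_sq (norm_nonneg x)]

lemma hasFDerivAt_nrm {x : E3} (hx : x ≠ 0) :
    HasFDerivAt (fun y : E3 => ‖y‖)
      ((2 * ‖x‖)⁻¹ • (∑ i, (2 * x i) • (EuclideanSpace.proj (𝕜 := ℝ) i))) x := by
  have h2 : HasFDerivAt (fun y : E3 => ∑ i, y i ^ 2)
      (∑ i, (2 * x i) • (EuclideanSpace.proj (𝕜 := ℝ) i)) x := by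
    refine HasFDerivAt.fun_sum (fun i _ => ?_)
    have hp : HasFDerivAt (fun y : E3 => y i) (EuclideanSpace.proj (𝕜 := ℝ) i) x :=
      (EuclideanSpace.proj (𝕜 := ℝ) i).hasFDerivAt
    have hsq : HasDerivAt (fun r : ℝ => r ^ 2) (2 * x i) (x i) := by
      simpa using hasDerivAt_pow 2 (x i)
    exact hsq.comp_hasFDerivAt x hp
  have hs : HasDerivAt Real.sqrt (1 / (2 * Real.sqrt (∑ i, x i ^ 2))) (∑ i, x i ^ 2) :=
    Real.hasDerivAt_sqrt (sumsq_pos hx).ne'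
  have h3 := hs.comp_hasFDerivAt x h2
  have h4 : HasFDerivAt (fun y : E3 => Real.sqrt (∑ i, y i ^ 2))
      ((1 / (2 * Real.sqrt (∑ i, x i ^ 2))) •
        (∑ i, (2 * x i) • (EuclideanSpace.proj (𝕜 := ℝ) i))) x := h3
  have heq : (fun y : E3 => Real.sqrt (∑ i, y i ^ 2)) = fun y : E3 => ‖y‖ := by
    funext y; exact sqrt_sumsq y
  rw [heq, sqrt_sumsq, one_div] at h4
  exact h4

lemma eval_sum_proj (x : E3) (j : Fin 3) :
    (∑ k : Fin 3, (2 * x k) • (EuclideanSpace.proj (𝕜 := ℝ) k))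
      (EuclideanSpace.single j 1) = 2 * x j := by
  rw [ContinuousLinearMap.sum_apply]
  simp only [ContinuousLinearMap.smul_apply, proj_single, smul_eq_mul]
  rw [Finset.sum_eq_single j]
  · simp
  · intro i _ hij; simp [hij]
  · intro h; exact absurd (Finset.mem_univ j) h

lemma fderiv_nrm_apply {x : E3} (hx : x ≠ 0) (j : Fin 3) :
    fderiv ℝ (fun y : E3 => ‖y‖) x (EuclideanSpace.single j 1) = x j / ‖x‖ := by
  rw [(hasFDerivAt_nrm hx).fderiv]
  have hn : ‖x‖ ≠ 0 := norm_ne_zero_iff.2 hx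
  rw [ContinuousLinearMap.smul_apply, eval_sum_proj, smul_eq_mul, mul_inv]
  field_simp

lemma diffAt_nrm {x : E3} (hx : x ≠ 0) : DifferentiableAt ℝ (fun y : E3 => ‖y‖) x :=
  (hasFDerivAt_nrm hx).differentiableAt

lemma hasFDerivAt_invr {x : E3} (hx : x ≠ 0) :
    HasFDerivAt (fun y : E3 => ‖y‖⁻¹)
      ((-(‖x‖ ^ 2)⁻¹) • ((2 * ‖x‖)⁻¹ • (∑ i, (2 * x i) • (EuclideanSpace.proj (𝕜 := ℝ) i)))) x := by
  have hn : ‖x‖ ≠ 0 := norm_ne_zero_iff.2 hx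
  have hi : HasDerivAt (fun r : ℝ => r⁻¹) (-(‖x‖ ^ 2)⁻¹) ‖x‖ := hasDerivAt_inv hn
  exact hi.comp_hasFDerivAt x (hasFDerivAt_nrm hx)

lemma fderiv_invr_apply {x : E3} (hx : x ≠ 0) (j : Fin 3) :
    fderiv ℝ (fun y : E3 => ‖y‖⁻¹) x (EuclideanSpace.single j 1) =
      (-1) * ((x j / ‖x‖) * (‖x‖⁻¹ * ‖x‖⁻¹)) := by
  have hn : ‖x‖ ≠ 0 := norm_ne_zero_iff.2 hx
  rw [(hasFDerivAt_invr hx).fderiv]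
  rw [ContinuousLinearMap.smul_apply, ContinuousLinearMap.smul_apply, eval_sum_proj]
  simp only [smul_eq_mul]
  rw [pow_two, mul_inv, mul_inv]
  ring

lemma diffAt_invr {x : E3} (hx : x ≠ 0) : DifferentiableAt ℝ (fun y : E3 => ‖y‖⁻¹) x :=
  (hasFDerivAt_invr hx).differentiableAt

lemma hasFDerivAt_omg (i : Fin 3) {x : E3} (hx : x ≠ 0) :
    HasFDerivAt (fun y : E3 => y i / ‖y‖)
      ((x i) • ((-(‖x‖ ^ 2)⁻¹) • ((2 * ‖x‖)⁻¹ • (∑ k, (2 * x k) • (EuclideanSpace.proj (𝕜 := ℝ) k))))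
        + ‖x‖⁻¹ • (EuclideanSpace.proj (𝕜 := ℝ) i)) x := by
  have hp : HasFDerivAt (fun y : E3 => y i) (EuclideanSpace.proj (𝕜 := ℝ) i) x :=
    (EuclideanSpace.proj (𝕜 := ℝ) i).hasFDerivAt
  have hmul := hp.fun_mul (hasFDerivAt_invr hx)
  have heq : (fun y : E3 => y i * ‖y‖⁻¹) = fun y : E3 => y i / ‖y‖ := by
    funext y; rw [div_eq_mul_inv]
  rw [heq] at hmul
  exact hmul

lemma fderiv_omg_apply (i : Fin 3) {x : E3} (hx : x ≠ 0) (j : Fin 3) :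
    fderiv ℝ (fun y : E3 => y i / ‖y‖) x (EuclideanSpace.single j 1) =
      (if i = j then (1:ℝ) else 0) * ‖x‖⁻¹
        + (-1) * ((x i / ‖x‖) * ((x j / ‖x‖) * ‖x‖⁻¹)) := by
  have hn : ‖x‖ ≠ 0 := norm_ne_zero_iff.2 hx
  rw [(hasFDerivAt_omg i hx).fderiv]
  rw [ContinuousLinearMap.add_apply, ContinuousLinearMap.smul_apply,
    ContinuousLinearMap.smul_apply, ContinuousLinearMap.smul_apply,
    ContinuousLinearMap.smul_apply, eval_sum_proj, proj_single]
  simp only [smul_eq_mul]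
  rw [pow_two, mul_inv, mul_inv]
  split_ifs <;> field_simp <;> ring

lemma diffAt_omg (i : Fin 3) {x : E3} (hx : x ≠ 0) :
    DifferentiableAt ℝ (fun y : E3 => y i / ‖y‖) x :=
  (hasFDerivAt_omg i hx).differentiableAt

/-- Spatial-derivative closure of the coefficient class. -/
lemma IsC.pxs_closure {c : E3 → ℝ} (hc : IsC c) (j : Fin 3) :
    ∃ d : E3 → ℝ, IsC d ∧ ∀ x : E3, x ≠ 0 →
      fderiv ℝ c x (EuclideanSpace.single j 1) = d x := by
  induction hc with
  | const r =>
      exact ⟨fun _ => 0, IsC.const 0, fun x hx => by simp [fderiv_const]⟩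
  | omg i =>
      refine ⟨fun x => (if i = j then (1:ℝ) else 0) * ‖x‖⁻¹
        + (-1) * ((x i / ‖x‖) * ((x j / ‖x‖) * ‖x‖⁻¹)), ?_, fun x hx =>
          fderiv_omg_apply i hx j⟩
      exact ((IsC.const _).mul IsC.invr).add
        ((IsC.const (-1)).mul ((IsC.omg i).mul ((IsC.omg j).mul IsC.invr)))
  | invr =>
      refine ⟨fun x => (-1) * ((x j / ‖x‖) * (‖x‖⁻¹ * ‖x‖⁻¹)), ?_, fun x hx =>
        fderiv_invr_apply hx j⟩
      exact (IsC.const (-1)).mul ((IsC.omg j).mul (IsC.invr.mul IsC.invr))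
  | @add c1 c2 hc hd ihc ihd =>
      obtain ⟨d1, hd1, he1⟩ := ihc; obtain ⟨d2, hd2, he2⟩ := ihd
      refine ⟨fun x => d1 x + d2 x, hd1.add hd2, fun x hx => ?_⟩
      beta_reduce
      rw [fderiv_fun_add (hc.diffAt hx) (hd.diffAt hx)]
      simp [he1 x hx, he2 x hx]
  | @mul c1 c2 hc hd ihc ihd =>
      obtain ⟨d1, hd1, he1⟩ := ihc; obtain ⟨d2, hd2, he2⟩ := ihd
      refine ⟨fun x => c1 x * d2 x + c2 x * d1 x,
        (hc.mul hd2).add (hd.mul hd1), fun x hx => ?_⟩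
      beta_reduce
      rw [fderiv_fun_mul (hc.diffAt hx) (hd.diffAt hx)]
      simp [he1 x hx, he2 x hx]

/-- Rotation closure of the coefficient class. -/
lemma IsC.rot_closure {c : E3 → ℝ} (hc : IsC c) (p q : Fin 3) :
    ∃ d : E3 → ℝ, IsC d ∧ ∀ x : E3, x ≠ 0 →
      x p * fderiv ℝ c x (EuclideanSpace.single q 1)
        - x q * fderiv ℝ c x (EuclideanSpace.single p 1) = d x := by
  induction hc with
  | const r =>
      exact ⟨fun _ => 0, IsC.const 0, fun x hx => by simp [fderiv_const]⟩
  | omg i =>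
      refine ⟨fun x => (if i = q then (1:ℝ) else 0) * (x p / ‖x‖)
        + (-1) * ((if i = p then (1:ℝ) else 0) * (x q / ‖x‖)), ?_, fun x hx => ?_⟩
      · exact ((IsC.const _).mul (IsC.omg p)).add
          ((IsC.const (-1)).mul ((IsC.const _).mul (IsC.omg q)))
      · rw [fderiv_omg_apply i hx q, fderiv_omg_apply i hx p]
        have hn : ‖x‖ ≠ 0 := norm_ne_zero_iff.2 hx
        beta_reduce
        split_ifs <;> field_simp <;> ring
  | invr =>
      refine ⟨fun _ => 0, IsC.const 0, fun x hx => ?_⟩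
      rw [fderiv_invr_apply hx q, fderiv_invr_apply hx p]
      ring
  | @add c1 c2 hc hd ihc ihd =>
      obtain ⟨d1, hd1, he1⟩ := ihc; obtain ⟨d2, hd2, he2⟩ := ihd
      refine ⟨fun x => d1 x + d2 x, hd1.add hd2, fun x hx => ?_⟩
      beta_reduce
      rw [← he1 x hx, ← he2 x hx, fderiv_fun_add (hc.diffAt hx) (hd.diffAt hx)]
      simp
      ring
  | @mul c1 c2 hc hd ihc ihd =>
      obtain ⟨d1, hd1, he1⟩ := ihc; obtain ⟨d2, hd2, he2⟩ := ihd
      refine ⟨fun x => c1 x * d2 x + c2 x * d1 x,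
        (hc.mul hd2).add (hd.mul hd1), fun x hx => ?_⟩
      beta_reduce
      rw [← he1 x hx, ← he2 x hx, fderiv_fun_mul (hc.diffAt hx) (hd.diffAt hx)]
      simp
      ring

/-! ## Part E: Zop action on coefficients; term structure -/

lemma IsC.zop_closure (aa : Fin 7) {c : E3 → ℝ} (hc : IsC c) :
    ∃ d : E3 → ℝ, IsC d ∧ ∀ (t : ℝ) (x : E3), x ≠ 0 →
      Zop aa (fun _ y => c y) t x = d x := by
  rcases fin7_cases aa with rfl|rfl|rfl|rfl|rfl|rfl|rfl
  · exact ⟨fun _ => 0, IsC.const 0, fun t x hx => by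
      show deriv (fun _ => c x) t = 0; simp⟩
  · obtain ⟨d, hd, he⟩ := hc.pxs_closure 0
    exact ⟨d, hd, fun t x hx => he x hx⟩
  · obtain ⟨d, hd, he⟩ := hc.pxs_closure 1
    exact ⟨d, hd, fun t x hx => he x hx⟩
  · obtain ⟨d, hd, he⟩ := hc.pxs_closure 2
    exact ⟨d, hd, fun t x hx => he x hx⟩
  · obtain ⟨d, hd, he⟩ := hc.rot_closure 1 2
    exact ⟨d, hd, fun t x hx => he x hx⟩
  · obtain ⟨d, hd, he⟩ := hc.rot_closure 2 0
    exact ⟨d, hd, fun t x hx => he x hx⟩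
  · obtain ⟨d, hd, he⟩ := hc.rot_closure 0 1
    exact ⟨d, hd, fun t x hx => he x hx⟩

/-- A symbolic term in the decomposition. -/
structure Tm (M : ℕ) where
  c : E3 → ℝ
  nu1 : List (Fin 7)
  nu2 : List (Fin 7)
  a : Fin 4
  b : Fin 4
  J : Fin M
  K : Fin M
  g1 : Bool

variable {M : ℕ}

def Tm.f1 (T : Tm M) (u : ℝ → E3 → Fin M → ℝ) : SF :=
  Ziter T.nu1 ((if T.g1 then gd T.a else pd T.a) (comp u T.J))

def Tm.f2 (T : Tm M) (v : ℝ → E3 → Fin M → ℝ) : SF :=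
  Ziter T.nu2 ((if T.g1 then pd T.b else gd T.b) (comp v T.K))

def Tm.val (T : Tm M) (u v : ℝ → E3 → Fin M → ℝ) : SF :=
  fun t x => T.c x * (T.f1 u t x * T.f2 v t x)

def VSm (u : ℝ → E3 → Fin M → ℝ) : Prop :=
  ∀ J, ContDiff ℝ (⊤ : ℕ∞) (Function.uncurry (comp u J))

lemma VSm.smOn {u : ℝ → E3 → Fin M → ℝ} (hu : VSm u) (J : Fin M) :
    SmOn (comp u J) := (hu J).contDiffOn

lemma Tm.smOn_f1 (T : Tm M) {u} (hu : VSm u) : SmOn (T.f1 u) := by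
  unfold Tm.f1
  cases T.g1 <;> simp only [if_true, if_false, Bool.false_eq_true]
  · exact ((hu.smOn T.J).pdOp T.a).ziter T.nu1
  · exact ((hu.smOn T.J).gdOp T.a).ziter T.nu1

lemma Tm.smOn_f2 (T : Tm M) {v} (hv : VSm v) : SmOn (T.f2 v) := by
  unfold Tm.f2
  cases T.g1 <;> simp only [if_true, if_false, Bool.false_eq_true]
  · exact ((hv.smOn T.K).gdOp T.b).ziter T.nu2
  · exact ((hv.smOn T.K).pdOp T.b).ziter T.nu2

lemma Tm.smOn_val (T : Tm M) {u v} (hc : IsC T.c) (hu : VSm u) (hv : VSm v) :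
    SmOn (T.val u v) :=
  SmOn.cmul hc ((T.smOn_f1 hu).mul (T.smOn_f2 hv))

lemma Zop_tm_val (aa : Fin 7) (T : Tm M) (hc : IsC T.c) :
    ∃ d : E3 → ℝ, IsC d ∧ ∀ (u v : ℝ → E3 → Fin M → ℝ), VSm u → VSm v →
      ∀ (t : ℝ) (x : E3), x ≠ 0 →
      Zop aa (T.val u v) t x =
        (Tm.mk d T.nu1 T.nu2 T.a T.b T.J T.K T.g1).val u v t x
        + (Tm.mk T.c (aa :: T.nu1) T.nu2 T.a T.b T.J T.K T.g1).val u v t x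
        + (Tm.mk T.c T.nu1 (aa :: T.nu2) T.a T.b T.J T.K T.g1).val u v t x := by
  obtain ⟨d, hd, he⟩ := hc.zop_closure aa
  refine ⟨d, hd, fun u v hu hv t x hx => ?_⟩
  have h1 : SmOn (T.f1 u) := T.smOn_f1 hu
  have h2 : SmOn (T.f2 v) := T.smOn_f2 hv
  have hP : SmOn (fun t x => T.f1 u t x * T.f2 v t x) := h1.mul h2
  have step1 : Zop aa (T.val u v) t x
      = Zop aa (fun _ y => T.c y) t x * (T.f1 u t x * T.f2 v t x)
        + T.c x * Zop aa (fun t x => T.f1 u t x * T.f2 v t x) t x := by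
    exact Zop_mul aa hc.smOn hP hx
  have step2 : Zop aa (fun t x => T.f1 u t x * T.f2 v t x) t x
      = Zop aa (T.f1 u) t x * T.f2 v t x + T.f1 u t x * Zop aa (T.f2 v) t x :=
    Zop_mul aa h1 h2 hx
  rw [step1, step2, he t x hx]
  show d x * (T.f1 u t x * T.f2 v t x) + T.c x * (Zop aa (T.f1 u) t x * T.f2 v t x
      + T.f1 u t x * Zop aa (T.f2 v) t x)
    = d x * (T.f1 u t x * T.f2 v t x)
      + T.c x * (Zop aa (T.f1 u) t x * T.f2 v t x)
      + T.c x * (T.f1 u t x * Zop aa (T.f2 v) t x)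
  ring

/-! ## Part F: the basic null decomposition identity -/

lemma pd_decomp (α : Fin 4) (w : SF) (t : ℝ) (x : E3) :
    pd α w t x = gd α w t x + omg α x * pr w t x := by
  rcases fin4_cases α with rfl|rfl|rfl|rfl
  · show pt w t x = (pt w t x + pr w t x) + (-1) * pr w t x; ring
  · show px 0 w t x = (px 0 w t x - (x 0 / ‖x‖) * pr w t x) + (x 0 / ‖x‖) * pr w t x; ring
  · show px 1 w t x = (px 1 w t x - (x 1 / ‖x‖) * pr w t x) + (x 1 / ‖x‖) * pr w t x; ring
  · show px 2 w t x = (px 2 w t x - (x 2 / ‖x‖) * pr w t x) + (x 2 / ‖x‖) * pr w t x; ring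

lemma pr_eq (w : SF) (t : ℝ) (x : E3) :
    pr w t x = ∑ i : Fin 3, omg i.succ x * pd i.succ w t x :=
  Finset.sum_congr rfl fun i _ => by rcases fin3_cases i with rfl|rfl|rfl <;> rfl

lemma omg_null {M : ℕ} (A : Fin M → Fin M → Fin M → Fin 4 → Fin 4 → ℝ)
    (hnull : ∀ ξ : Fin 4 → ℝ, ξ 0 ^ 2 - ξ 1 ^ 2 - ξ 2 ^ 2 - ξ 3 ^ 2 = 0 →
      ∀ I J K, ∑ α, ∑ β, A I J K α β * ξ α * ξ β = 0)
    (I J K : Fin M) {x : E3} (hx : x ≠ 0) :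
    ∑ α, ∑ β, A I J K α β * omg α x * omg β x = 0 := by
  refine hnull (fun α => omg α x) ?_ I J K
  have hn : ‖x‖ ≠ 0 := norm_ne_zero_iff.2 hx
  show (-1:ℝ) ^ 2 - (x 0 / ‖x‖) ^ 2 - (x 1 / ‖x‖) ^ 2 - (x 2 / ‖x‖) ^ 2 = 0
  have hsq : ‖x‖ ^ 2 = x 0 ^ 2 + x 1 ^ 2 + x 2 ^ 2 := by
    rw [normsq_eq, Fin.sum_univ_three]
  field_simp
  linarith [hsq]

lemma base_core (A' : Fin 4 → Fin 4 → ℝ) (U V : SF) (t : ℝ) (x : E3)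
    (h0 : ∑ α, ∑ β, A' α β * omg α x * omg β x = 0) :
    ∑ α, ∑ β, A' α β * pd α U t x * pd β V t x
      = (∑ α, ∑ β, A' α β * (gd α U t x * pd β V t x))
        + ∑ i : Fin 3, ∑ β,
            ((∑ γ, A' γ β * omg γ x) * omg i.succ x) * (pd i.succ U t x * gd β V t x) := by
  have key : ∀ α β : Fin 4,
      A' α β * pd α U t x * pd β V t x
        = A' α β * (gd α U t x * pd β V t x)
          + (A' α β * omg α x) * (pr U t x * gd β V t x)
          + (A' α β * omg α x * omg β x) * (pr U t x * pr V t x) := by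
    intro α β
    rw [pd_decomp α U t x, pd_decomp β V t x]
    ring
  have hzero : (∑ α : Fin 4, ∑ β : Fin 4,
      (A' α β * omg α x * omg β x) * (pr U t x * pr V t x)) = 0 := by
    calc (∑ α : Fin 4, ∑ β : Fin 4, (A' α β * omg α x * omg β x) * (pr U t x * pr V t x))
        = ∑ α : Fin 4, (∑ β : Fin 4, A' α β * omg α x * omg β x) * (pr U t x * pr V t x) :=
          Finset.sum_congr rfl fun α _ => (Finset.sum_mul _ _ _).symm
      _ = (∑ α : Fin 4, ∑ β : Fin 4, A' α β * omg α x * omg β x) * (pr U t x * pr V t x) :=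
          (Finset.sum_mul _ _ _).symm
      _ = 0 := by rw [h0, zero_mul]
  have hS2 : (∑ α : Fin 4, ∑ β : Fin 4, (A' α β * omg α x) * (pr U t x * gd β V t x))
      = ∑ i : Fin 3, ∑ β : Fin 4,
          ((∑ γ, A' γ β * omg γ x) * omg i.succ x) * (pd i.succ U t x * gd β V t x) := by
    rw [Finset.sum_comm]
    rw [Finset.sum_comm (γ := Fin 3)]
    refine Finset.sum_congr rfl fun β _ => ?_
    rw [← Finset.sum_mul]
    rw [pr_eq U t x]
    rw [Finset.sum_mul _ _ (gd β V t x)]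
    rw [Finset.mul_sum]
    exact Finset.sum_congr rfl fun i _ => by ring
  calc ∑ α, ∑ β, A' α β * pd α U t x * pd β V t x
      = ∑ α : Fin 4, ∑ β : Fin 4,
          (A' α β * (gd α U t x * pd β V t x)
            + (A' α β * omg α x) * (pr U t x * gd β V t x)
            + (A' α β * omg α x * omg β x) * (pr U t x * pr V t x)) :=
        Finset.sum_congr rfl fun α _ => Finset.sum_congr rfl fun β _ => key α β
    _ = (∑ α : Fin 4, ∑ β : Fin 4, A' α β * (gd α U t x * pd β V t x))
        + (∑ α : Fin 4, ∑ β : Fin 4, (A' α β * omg α x) * (pr U t x * gd β V t x))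
        + (∑ α : Fin 4, ∑ β : Fin 4, (A' α β * omg α x * omg β x) * (pr U t x * pr V t x)) := by
        simp only [Finset.sum_add_distrib]
    _ = _ := by rw [hzero, add_zero, hS2]

/-! ## Part G: the main decomposition -/

def FF {M : ℕ} (A : Fin M → Fin M → Fin M → Fin 4 → Fin 4 → ℝ) (I : Fin M)
    (u v : ℝ → E3 → Fin M → ℝ) : SF := fun s y =>
  ∑ J, ∑ K, ∑ α, ∑ β, A I J K α β * pd α (comp u J) s y * pd β (comp v K) s y

lemma isC_omg4 (γ : Fin 4) : IsC (fun x => omg γ x) := by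
  rcases fin4_cases γ with rfl|rfl|rfl|rfl
  · exact IsC.const (-1)
  · exact IsC.omg 0
  · exact IsC.omg 1
  · exact IsC.omg 2

lemma isC_type2 {M : ℕ} (A : Fin M → Fin M → Fin M → Fin 4 → Fin 4 → ℝ)
    (I J K : Fin M) (β : Fin 4) (i : Fin 3) :
    IsC (fun x => (∑ γ, A I J K γ β * omg γ x) * omg i.succ x) := by
  have h1 : (fun x : E3 => ∑ γ, A I J K γ β * omg γ x)
      = fun x => A I J K 0 β * omg 0 x + A I J K 1 β * omg 1 x
          + A I J K 2 β * omg 2 x + A I J K 3 β * omg 3 x := by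
    funext x; rw [Fin.sum_univ_four]
  have h2 : IsC (fun x : E3 => ∑ γ, A I J K γ β * omg γ x) := by
    rw [h1]
    exact ((((IsC.const _).mul (isC_omg4 0)).add ((IsC.const _).mul (isC_omg4 1))).add
      ((IsC.const _).mul (isC_omg4 2))).add ((IsC.const _).mul (isC_omg4 3))
  have h3 : IsC (fun x => omg i.succ x) := isC_omg4 i.succ
  exact h2.mul h3

theorem decompose {M : ℕ} (A : Fin M → Fin M → Fin M → Fin 4 → Fin 4 → ℝ)
    (hnull : ∀ ξ : Fin 4 → ℝ, ξ 0 ^ 2 - ξ 1 ^ 2 - ξ 2 ^ 2 - ξ 3 ^ 2 = 0 →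
      ∀ I J K, ∑ α, ∑ β, A I J K α β * ξ α * ξ β = 0)
    (I : Fin M) (l : List (Fin 7)) :
    ∃ (k : ℕ) (T : Fin k → Tm M),
      (∀ i, IsC (T i).c ∧ (T i).nu1.length + (T i).nu2.length ≤ l.length) ∧
      ∀ u v, VSm u → VSm v → ∀ (t : ℝ) (x : E3), x ≠ 0 →
        Ziter l (FF A I u v) t x = ∑ i, (T i).val u v t x := by
  induction l with
  | nil =>
      classical
      set ι := (Fin M × Fin M × Fin 4 × Fin 4) ⊕ (Fin M × Fin M × Fin 3 × Fin 4) with hι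
      let tmOf : ι → Tm M := fun p =>
        Sum.elim
          (fun q : Fin M × Fin M × Fin 4 × Fin 4 =>
            Tm.mk (fun _ => A I q.1 q.2.1 q.2.2.1 q.2.2.2) [] [] q.2.2.1 q.2.2.2 q.1 q.2.1 true)
          (fun q : Fin M × Fin M × Fin 3 × Fin 4 =>
            Tm.mk (fun x => (∑ γ, A I q.1 q.2.1 γ q.2.2.2 * omg γ x) * omg q.2.2.1.succ x)
              [] [] q.2.2.1.succ q.2.2.2 q.1 q.2.1 false) p
      obtain e := Fintype.equivFin ι
      have hall : ∀ p : ι, IsC (tmOf p).c ∧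
          (tmOf p).nu1.length + (tmOf p).nu2.length ≤ ([] : List (Fin 7)).length := by
        rintro (⟨J, K, α, β⟩ | ⟨J, K, i, β⟩)
        · exact ⟨IsC.const _, le_refl _⟩
        · exact ⟨isC_type2 A I J K β i, le_refl _⟩
      refine ⟨Fintype.card ι, fun j => tmOf (e.symm j), fun j => hall (e.symm j), ?_⟩
      intro u v hu hv t x hx
      have hsum : ∑ j, (tmOf (e.symm j)).val u v t x = ∑ p : ι, (tmOf p).val u v t x :=
        Equiv.sum_comp e.symm (fun p => (tmOf p).val u v t x)
      rw [hsum]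
      have hval1 : ∀ (J K : Fin M) (α β : Fin 4),
          (tmOf (Sum.inl (J, K, α, β))).val u v t x
            = A I J K α β * (gd α (comp u J) t x * pd β (comp v K) t x) := by
        intro J K α β; rfl
      have hval2 : ∀ (J K : Fin M) (i : Fin 3) (β : Fin 4),
          (tmOf (Sum.inr (J, K, i, β))).val u v t x
            = ((∑ γ, A I J K γ β * omg γ x) * omg i.succ x)
                * (pd i.succ (comp u J) t x * gd β (comp v K) t x) := by
        intro J K i β; rfl
      rw [Fintype.sum_sum_type]
      show FF A I u v t x = _
      rw [FF]
      have hcore : ∀ (J K : Fin M),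
          ∑ α, ∑ β, A I J K α β * pd α (comp u J) t x * pd β (comp v K) t x
            = (∑ α, ∑ β, A I J K α β * (gd α (comp u J) t x * pd β (comp v K) t x))
              + ∑ i : Fin 3, ∑ β, ((∑ γ, A I J K γ β * omg γ x) * omg i.succ x)
                  * (pd i.succ (comp u J) t x * gd β (comp v K) t x) :=
        fun J K => base_core (A I J K) (comp u J) (comp v K) t x (omg_null A hnull I J K hx)
      calc ∑ J, ∑ K, ∑ α, ∑ β, A I J K α β * pd α (comp u J) t x * pd β (comp v K) t x
          = ∑ J, ∑ K,
              ((∑ α, ∑ β, A I J K α β * (gd α (comp u J) t x * pd β (comp v K) t x))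
                + ∑ i : Fin 3, ∑ β, ((∑ γ, A I J K γ β * omg γ x) * omg i.succ x)
                    * (pd i.succ (comp u J) t x * gd β (comp v K) t x)) :=
            Finset.sum_congr rfl fun J _ => Finset.sum_congr rfl fun K _ => hcore J K
        _ = (∑ J, ∑ K, ∑ α, ∑ β, A I J K α β * (gd α (comp u J) t x * pd β (comp v K) t x))
            + ∑ J, ∑ K, ∑ i : Fin 3, ∑ β, ((∑ γ, A I J K γ β * omg γ x) * omg i.succ x)
                * (pd i.succ (comp u J) t x * gd β (comp v K) t x) := by
            simp only [Finset.sum_add_distrib]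
        _ = _ := by
            congr 1
            · rw [Fintype.sum_prod_type]
              refine Finset.sum_congr rfl fun J _ => ?_
              rw [Fintype.sum_prod_type]
              refine Finset.sum_congr rfl fun K _ => ?_
              rw [Fintype.sum_prod_type]
              refine Finset.sum_congr rfl fun α _ => ?_
              exact Finset.sum_congr rfl fun β _ => (hval1 J K α β).symm
            · rw [Fintype.sum_prod_type]
              refine Finset.sum_congr rfl fun J _ => ?_
              rw [Fintype.sum_prod_type]
              refine Finset.sum_congr rfl fun K _ => ?_
              rw [Fintype.sum_prod_type]
              refine Finset.sum_congr rfl fun i _ => ?_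
              exact Finset.sum_congr rfl fun β _ => (hval2 J K i β).symm
  | cons aa l ih =>
      classical
      obtain ⟨k, T, hok, heq⟩ := ih
      have hch : ∀ i : Fin k, ∃ d : E3 → ℝ, IsC d ∧
          ∀ (u v : ℝ → E3 → Fin M → ℝ), VSm u → VSm v →
          ∀ (t : ℝ) (x : E3), x ≠ 0 →
          Zop aa ((T i).val u v) t x =
            (Tm.mk d (T i).nu1 (T i).nu2 (T i).a (T i).b (T i).J (T i).K (T i).g1).val u v t x
            + (Tm.mk (T i).c (aa :: (T i).nu1) (T i).nu2 (T i).a (T i).b (T i).J (T i).K (T i).g1).val u v t x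
            + (Tm.mk (T i).c (T i).nu1 (aa :: (T i).nu2) (T i).a (T i).b (T i).J (T i).K (T i).g1).val u v t x :=
        fun i => Zop_tm_val aa (T i) (hok i).1
      choose d hd1 hd2 using hch
      let T3 : Fin k × Fin 3 → Tm M := fun p =>
        ![Tm.mk (d p.1) (T p.1).nu1 (T p.1).nu2 (T p.1).a (T p.1).b (T p.1).J (T p.1).K (T p.1).g1,
          Tm.mk (T p.1).c (aa :: (T p.1).nu1) (T p.1).nu2 (T p.1).a (T p.1).b (T p.1).J (T p.1).K (T p.1).g1,
          Tm.mk (T p.1).c (T p.1).nu1 (aa :: (T p.1).nu2) (T p.1).a (T p.1).b (T p.1).J (T p.1).K (T p.1).g1] p.2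
      obtain e := Fintype.equivFin (Fin k × Fin 3)
      have hall3 : ∀ p : Fin k × Fin 3, IsC (T3 p).c ∧
          (T3 p).nu1.length + (T3 p).nu2.length ≤ (aa :: l).length := by
        rintro ⟨i, m⟩
        have h2 := (hok i).2
        rcases fin3_cases m with rfl|rfl|rfl
        · refine ⟨hd1 i, ?_⟩
          show (T i).nu1.length + (T i).nu2.length ≤ l.length + 1
          omega
        · refine ⟨(hok i).1, ?_⟩
          show (aa :: (T i).nu1).length + (T i).nu2.length ≤ l.length + 1
          rw [List.length_cons]
          omega
        · refine ⟨(hok i).1, ?_⟩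
          show (T i).nu1.length + (aa :: (T i).nu2).length ≤ l.length + 1
          rw [List.length_cons]
          omega
      refine ⟨Fintype.card (Fin k × Fin 3), fun j => T3 (e.symm j), fun j => hall3 (e.symm j), ?_⟩
      · intro u v hu hv t x hx
        have hz : Ziter (aa :: l) (FF A I u v) t x
            = Zop aa (Ziter l (FF A I u v)) t x := rfl
        rw [hz]
        have hcongr : Zop aa (Ziter l (FF A I u v)) t x
            = Zop aa (fun t x => ∑ i, (T i).val u v t x) t x :=
          Zop_congr aa (fun t x hx => heq u v hu hv t x hx) hx
        rw [hcongr]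
        rw [Zop_fsum aa (fun i _ => (T i).smOn_val (hok i).1 hu hv) hx]
        have hstep : ∀ i : Fin k, Zop aa ((T i).val u v) t x
            = ∑ m : Fin 3, (T3 (i, m)).val u v t x := by
          intro i
          rw [Fin.sum_univ_three]
          exact hd2 i u v hu hv t x hx
        calc ∑ i, Zop aa ((T i).val u v) t x
            = ∑ i, ∑ m : Fin 3, (T3 (i, m)).val u v t x :=
              Finset.sum_congr rfl fun i _ => hstep i
          _ = ∑ p : Fin k × Fin 3, (T3 p).val u v t x :=
              (Fintype.sum_prod_type (fun p : Fin k × Fin 3 => (T3 p).val u v t x)).symm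
          _ = ∑ j, (T3 (e.symm j)).val u v t x :=
              (Equiv.sum_comp e.symm (fun p => (T3 p).val u v t x)).symm

/-! ## Part H: final assembly -/

lemma ZgoodAfter_nonneg {M : ℕ} (N : ℕ) (u : ℝ → E3 → Fin M → ℝ) (t : ℝ) (x : E3) :
    0 ≤ ZgoodAfter N u t x :=
  Finset.sum_nonneg fun _ _ => Finset.sum_nonneg fun _ _ =>
    Finset.sum_nonneg fun _ _ => Real.sqrt_nonneg _

lemma ZgradAfter_nonneg {M : ℕ} (N : ℕ) (u : ℝ → E3 → Fin M → ℝ) (t : ℝ) (x : E3) :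
    0 ≤ ZgradAfter N u t x :=
  Finset.sum_nonneg fun _ _ => Finset.sum_nonneg fun _ _ =>
    Finset.sum_nonneg fun _ _ => Real.sqrt_nonneg _

lemma abs_le_ZgoodAfter {M : ℕ} (N' : ℕ) (u : ℝ → E3 → Fin M → ℝ)
    (ν : List (Fin 7)) (hlen : ν.length ≤ N') (a : Fin 4) (J : Fin M) (t : ℝ) (x : E3) :
    |Ziter ν (gd a (comp u J)) t x| ≤ ZgoodAfter N' u t x := by
  have h1 : |Ziter ν (gd a (comp u J)) t x|
      ≤ Real.sqrt (∑ α, (Ziter ν (gd α (comp u J)) t x) ^ 2) := by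
    rw [← Real.sqrt_sq_eq_abs]
    exact Real.sqrt_le_sqrt (Finset.single_le_sum
      (fun α _ => sq_nonneg (Ziter ν (gd α (comp u J)) t x)) (Finset.mem_univ a))
  have h2 : Real.sqrt (∑ α, (Ziter ν (gd α (comp u J)) t x) ^ 2)
      ≤ ∑ I, Real.sqrt (∑ α, (Ziter ν (gd α (comp u I)) t x) ^ 2) :=
    Finset.single_le_sum
      (f := fun I => Real.sqrt (∑ α, (Ziter ν (gd α (comp u I)) t x) ^ 2))
      (fun I _ => Real.sqrt_nonneg _) (Finset.mem_univ J)
  have h3 : (∑ I, Real.sqrt (∑ α, (Ziter ν (gd α (comp u I)) t x) ^ 2))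
      ≤ ∑ μ : Fin ν.length → Fin 7, ∑ I,
          Real.sqrt (∑ α, (Ziter (List.ofFn μ) (gd α (comp u I)) t x) ^ 2) := by
    have := Finset.single_le_sum
      (f := fun μ : Fin ν.length → Fin 7 => ∑ I,
        Real.sqrt (∑ α, (Ziter (List.ofFn μ) (gd α (comp u I)) t x) ^ 2))
      (fun μ _ => Finset.sum_nonneg fun _ _ => Real.sqrt_nonneg _)
      (Finset.mem_univ (fun j => ν.get j))
    beta_reduce at this
    rwa [List.ofFn_get] at this
  have h4 : (∑ μ : Fin ν.length → Fin 7, ∑ I,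
        Real.sqrt (∑ α, (Ziter (List.ofFn μ) (gd α (comp u I)) t x) ^ 2))
      ≤ ZgoodAfter N' u t x := by
    refine Finset.single_le_sum
      (f := fun n => ∑ μ : Fin n → Fin 7, ∑ I,
        Real.sqrt (∑ α, (Ziter (List.ofFn μ) (gd α (comp u I)) t x) ^ 2))
      (fun n _ => Finset.sum_nonneg fun _ _ => Finset.sum_nonneg fun _ _ => Real.sqrt_nonneg _)
      ?_
    exact Finset.mem_range.2 (Nat.lt_succ_of_le hlen)
  exact h1.trans (h2.trans (h3.trans h4))

lemma abs_le_ZgradAfter {M : ℕ} (N' : ℕ) (u : ℝ → E3 → Fin M → ℝ)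
    (ν : List (Fin 7)) (hlen : ν.length ≤ N') (a : Fin 4) (J : Fin M) (t : ℝ) (x : E3) :
    |Ziter ν (pd a (comp u J)) t x| ≤ ZgradAfter N' u t x := by
  have h1 : |Ziter ν (pd a (comp u J)) t x|
      ≤ Real.sqrt (∑ α, (Ziter ν (pd α (comp u J)) t x) ^ 2) := by
    rw [← Real.sqrt_sq_eq_abs]
    exact Real.sqrt_le_sqrt (Finset.single_le_sum
      (fun α _ => sq_nonneg (Ziter ν (pd α (comp u J)) t x)) (Finset.mem_univ a))
  have h2 : Real.sqrt (∑ α, (Ziter ν (pd α (comp u J)) t x) ^ 2)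
      ≤ ∑ I, Real.sqrt (∑ α, (Ziter ν (pd α (comp u I)) t x) ^ 2) :=
    Finset.single_le_sum
      (f := fun I => Real.sqrt (∑ α, (Ziter ν (pd α (comp u I)) t x) ^ 2))
      (fun I _ => Real.sqrt_nonneg _) (Finset.mem_univ J)
  have h3 : (∑ I, Real.sqrt (∑ α, (Ziter ν (pd α (comp u I)) t x) ^ 2))
      ≤ ∑ μ : Fin ν.length → Fin 7, ∑ I,
          Real.sqrt (∑ α, (Ziter (List.ofFn μ) (pd α (comp u I)) t x) ^ 2) := by
    have := Finset.single_le_sum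
      (f := fun μ : Fin ν.length → Fin 7 => ∑ I,
        Real.sqrt (∑ α, (Ziter (List.ofFn μ) (pd α (comp u I)) t x) ^ 2))
      (fun μ _ => Finset.sum_nonneg fun _ _ => Real.sqrt_nonneg _)
      (Finset.mem_univ (fun j => ν.get j))
    beta_reduce at this
    rwa [List.ofFn_get] at this
  have h4 : (∑ μ : Fin ν.length → Fin 7, ∑ I,
        Real.sqrt (∑ α, (Ziter (List.ofFn μ) (pd α (comp u I)) t x) ^ 2))
      ≤ ZgradAfter N' u t x := by
    refine Finset.single_le_sum
      (f := fun n => ∑ μ : Fin n → Fin 7, ∑ I,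
        Real.sqrt (∑ α, (Ziter (List.ofFn μ) (pd α (comp u I)) t x) ^ 2))
      (fun n _ => Finset.sum_nonneg fun _ _ => Finset.sum_nonneg fun _ _ => Real.sqrt_nonneg _)
      ?_
    exact Finset.mem_range.2 (Nat.lt_succ_of_le hlen)
  exact h1.trans (h2.trans (h3.trans h4))

/-- The right-hand side expression. -/
def RHS4 {M : ℕ} (N : ℕ) (u v : ℝ → E3 → Fin M → ℝ) : SF := fun t x =>
  ZgoodAfter N u t x * ZgradAfter (N/2) v t x
    + ZgoodAfter (N/2) u t x * ZgradAfter N v t x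
    + ZgradAfter N u t x * ZgoodAfter (N/2) v t x
    + ZgradAfter (N/2) u t x * ZgoodAfter N v t x

lemma RHS4_nonneg {M : ℕ} (N : ℕ) (u v : ℝ → E3 → Fin M → ℝ) (t : ℝ) (x : E3) :
    0 ≤ RHS4 N u v t x := by
  have g1 := ZgoodAfter_nonneg N u t x
  have g2 := ZgoodAfter_nonneg (N/2) u t x
  have g3 := ZgoodAfter_nonneg N v t x
  have g4 := ZgoodAfter_nonneg (N/2) v t x
  have r1 := ZgradAfter_nonneg N u t x
  have r2 := ZgradAfter_nonneg (N/2) u t x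
  have r3 := ZgradAfter_nonneg N v t x
  have r4 := ZgradAfter_nonneg (N/2) v t x
  unfold RHS4
  nlinarith [mul_nonneg g1 r4, mul_nonneg g2 r3, mul_nonneg r1 g4, mul_nonneg r2 g3]

lemma tm_val_bound {M : ℕ} (T : Tm M) (B : ℝ) (hB0 : 0 ≤ B)
    (hB : ∀ x : E3, 1 ≤ ‖x‖ → |T.c x| ≤ B) (N : ℕ)
    (hlen : T.nu1.length + T.nu2.length ≤ N)
    (u v : ℝ → E3 → Fin M → ℝ) (t : ℝ) {x : E3} (hx1 : 1 ≤ ‖x‖) :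
    |T.val u v t x| ≤ B * RHS4 N u v t x := by
  have hmin : T.nu1.length ≤ N / 2 ∨ T.nu2.length ≤ N / 2 := by omega
  have hn1 : T.nu1.length ≤ N := by omega
  have hn2 : T.nu2.length ≤ N := by omega
  have habs : |T.val u v t x| = |T.c x| * (|T.f1 u t x| * |T.f2 v t x|) := by
    unfold Tm.val; rw [abs_mul, abs_mul]
  rw [habs]
  have hprod : |T.f1 u t x| * |T.f2 v t x| ≤ RHS4 N u v t x := by
    cases hg : T.g1
    · -- g1 = false : f1 is a pd-factor of u, f2 a gd-factor of v
      have hf1 : T.f1 u = Ziter T.nu1 (pd T.a (comp u T.J)) := by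
        unfold Tm.f1; rw [hg]; simp
      have hf2 : T.f2 v = Ziter T.nu2 (gd T.b (comp v T.K)) := by
        unfold Tm.f2; rw [hg]; simp
      rcases hmin with hm | hm
      · -- |f1| ≤ ZgradAfter (N/2) u, |f2| ≤ ZgoodAfter N v : term 4
        have b1 : |T.f1 u t x| ≤ ZgradAfter (N/2) u t x := by
          rw [hf1]; exact abs_le_ZgradAfter _ u T.nu1 hm T.a T.J t x
        have b2 : |T.f2 v t x| ≤ ZgoodAfter N v t x := by
          rw [hf2]; exact abs_le_ZgoodAfter _ v T.nu2 hn2 T.b T.K t x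
        have : |T.f1 u t x| * |T.f2 v t x| ≤ ZgradAfter (N/2) u t x * ZgoodAfter N v t x :=
          mul_le_mul b1 b2 (abs_nonneg _) (ZgradAfter_nonneg _ u t x)
        refine this.trans ?_
        unfold RHS4
        nlinarith [mul_nonneg (ZgoodAfter_nonneg N u t x) (ZgradAfter_nonneg (N/2) v t x),
          mul_nonneg (ZgoodAfter_nonneg (N/2) u t x) (ZgradAfter_nonneg N v t x),
          mul_nonneg (ZgradAfter_nonneg N u t x) (ZgoodAfter_nonneg (N/2) v t x)]
      · -- |f1| ≤ ZgradAfter N u, |f2| ≤ ZgoodAfter (N/2) v : term 3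
        have b1 : |T.f1 u t x| ≤ ZgradAfter N u t x := by
          rw [hf1]; exact abs_le_ZgradAfter _ u T.nu1 hn1 T.a T.J t x
        have b2 : |T.f2 v t x| ≤ ZgoodAfter (N/2) v t x := by
          rw [hf2]; exact abs_le_ZgoodAfter _ v T.nu2 hm T.b T.K t x
        have : |T.f1 u t x| * |T.f2 v t x| ≤ ZgradAfter N u t x * ZgoodAfter (N/2) v t x :=
          mul_le_mul b1 b2 (abs_nonneg _) (ZgradAfter_nonneg _ u t x)
        refine this.trans ?_
        unfold RHS4
        nlinarith [mul_nonneg (ZgoodAfter_nonneg N u t x) (ZgradAfter_nonneg (N/2) v t x),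
          mul_nonneg (ZgoodAfter_nonneg (N/2) u t x) (ZgradAfter_nonneg N v t x),
          mul_nonneg (ZgradAfter_nonneg (N/2) u t x) (ZgoodAfter_nonneg N v t x)]
    · -- g1 = true : f1 is a gd-factor of u, f2 a pd-factor of v
      have hf1 : T.f1 u = Ziter T.nu1 (gd T.a (comp u T.J)) := by
        unfold Tm.f1; rw [hg]; simp
      have hf2 : T.f2 v = Ziter T.nu2 (pd T.b (comp v T.K)) := by
        unfold Tm.f2; rw [hg]; simp
      rcases hmin with hm | hm
      · -- term 2 : ZgoodAfter (N/2) u * ZgradAfter N v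
        have b1 : |T.f1 u t x| ≤ ZgoodAfter (N/2) u t x := by
          rw [hf1]; exact abs_le_ZgoodAfter _ u T.nu1 hm T.a T.J t x
        have b2 : |T.f2 v t x| ≤ ZgradAfter N v t x := by
          rw [hf2]; exact abs_le_ZgradAfter _ v T.nu2 hn2 T.b T.K t x
        have : |T.f1 u t x| * |T.f2 v t x| ≤ ZgoodAfter (N/2) u t x * ZgradAfter N v t x :=
          mul_le_mul b1 b2 (abs_nonneg _) (ZgoodAfter_nonneg _ u t x)
        refine this.trans ?_
        unfold RHS4
        nlinarith [mul_nonneg (ZgoodAfter_nonneg N u t x) (ZgradAfter_nonneg (N/2) v t x),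
          mul_nonneg (ZgradAfter_nonneg N u t x) (ZgoodAfter_nonneg (N/2) v t x),
          mul_nonneg (ZgradAfter_nonneg (N/2) u t x) (ZgoodAfter_nonneg N v t x)]
      · -- term 1 : ZgoodAfter N u * ZgradAfter (N/2) v
        have b1 : |T.f1 u t x| ≤ ZgoodAfter N u t x := by
          rw [hf1]; exact abs_le_ZgoodAfter _ u T.nu1 hn1 T.a T.J t x
        have b2 : |T.f2 v t x| ≤ ZgradAfter (N/2) v t x := by
          rw [hf2]; exact abs_le_ZgradAfter _ v T.nu2 hm T.b T.K t x
        have : |T.f1 u t x| * |T.f2 v t x| ≤ ZgoodAfter N u t x * ZgradAfter (N/2) v t x :=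
          mul_le_mul b1 b2 (abs_nonneg _) (ZgoodAfter_nonneg _ u t x)
        refine this.trans ?_
        unfold RHS4
        nlinarith [mul_nonneg (ZgoodAfter_nonneg (N/2) u t x) (ZgradAfter_nonneg N v t x),
          mul_nonneg (ZgradAfter_nonneg N u t x) (ZgoodAfter_nonneg (N/2) v t x),
          mul_nonneg (ZgradAfter_nonneg (N/2) u t x) (ZgoodAfter_nonneg N v t x)]
  calc |T.c x| * (|T.f1 u t x| * |T.f2 v t x|)
      ≤ B * (|T.f1 u t x| * |T.f2 v t x|) :=
        mul_le_mul_of_nonneg_right (hB x hx1)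
          (mul_nonneg (abs_nonneg _) (abs_nonneg _))
    _ ≤ B * RHS4 N u v t x := mul_le_mul_of_nonneg_left hprod hB0

/-- null-form estimate for the semilinear terms ((3.1) in the paper). -/
theorem null_form_estimate_A (M N : ℕ)
    (A : Fin M → Fin M → Fin M → Fin 4 → Fin 4 → ℝ)
    (hnull : ∀ ξ : Fin 4 → ℝ, ξ 0 ^ 2 - ξ 1 ^ 2 - ξ 2 ^ 2 - ξ 3 ^ 2 = 0 →
      ∀ I J K, ∑ α, ∑ β, A I J K α β * ξ α * ξ β = 0) :
    ∃ C : ℝ, 0 < C ∧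
      ∀ (u v : ℝ → E3 → Fin M → ℝ),
      (∀ J, ContDiff ℝ (⊤ : ℕ∞) (Function.uncurry (comp u J))) →
      (∀ K, ContDiff ℝ (⊤ : ℕ∞) (Function.uncurry (comp v K))) →
      ∀ t x, 0 ≤ t → 1 ≤ ‖x‖ → ∀ I : Fin M,
      (∑ n ∈ Finset.range (N+1), ∑ μ : Fin n → Fin 7,
        |Ziter (List.ofFn μ) (fun s y =>
          ∑ J, ∑ K, ∑ α, ∑ β, A I J K α β * pd α (comp u J) s y * pd β (comp v K) s y) t x|)
        ≤ C * (ZgoodAfter N u t x * ZgradAfter (N/2) v t x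
            + ZgoodAfter (N/2) u t x * ZgradAfter N v t x
            + ZgradAfter N u t x * ZgoodAfter (N/2) v t x
            + ZgradAfter (N/2) u t x * ZgoodAfter N v t x) := by
  classical
  have hdec := fun (I : Fin M) (l : List (Fin 7)) => decompose A hnull I l
  choose k T hok heq using hdec
  have hBex : ∀ (I : Fin M) (l : List (Fin 7)) (i : Fin (k I l)),
      ∃ B : ℝ, 0 ≤ B ∧ ∀ x : E3, 1 ≤ ‖x‖ → |(T I l i).c x| ≤ B :=
    fun I l i => ((hok I l i).1).bound
  choose B hB0 hBb using hBex
  set C : ℝ := 1 + ∑ n ∈ Finset.range (N+1), ∑ μ : Fin n → Fin 7,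
      ∑ I : Fin M, ∑ i, B I (List.ofFn μ) i with hC
  have hCsum0 : 0 ≤ ∑ n ∈ Finset.range (N+1), ∑ μ : Fin n → Fin 7,
      ∑ I : Fin M, ∑ i, B I (List.ofFn μ) i :=
    Finset.sum_nonneg fun _ _ => Finset.sum_nonneg fun _ _ =>
      Finset.sum_nonneg fun _ _ => Finset.sum_nonneg fun _ _ => hB0 _ _ _
  refine ⟨C, by rw [hC]; linarith, ?_⟩
  intro u v hu hv t x ht hx1 I
  have hx : x ≠ 0 := by
    intro h; rw [h, norm_zero] at hx1; linarith
  have hmain : ∀ n, n ∈ Finset.range (N+1) → ∀ μ : Fin n → Fin 7,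
      |Ziter (List.ofFn μ) (fun s y =>
          ∑ J, ∑ K, ∑ α, ∑ β, A I J K α β * pd α (comp u J) s y * pd β (comp v K) s y) t x|
        ≤ (∑ i, B I (List.ofFn μ) i) * RHS4 N u v t x := by
    intro n hn μ
    have hnN : n ≤ N := Nat.lt_succ_iff.1 (Finset.mem_range.1 hn)
    have hFeq : (fun s y =>
        ∑ J, ∑ K, ∑ α, ∑ β, A I J K α β * pd α (comp u J) s y * pd β (comp v K) s y)
        = FF A I u v := rfl
    rw [hFeq, heq I (List.ofFn μ) u v hu hv t x hx]
    calc |∑ i, (T I (List.ofFn μ) i).val u v t x|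
        ≤ ∑ i, |(T I (List.ofFn μ) i).val u v t x| := Finset.abs_sum_le_sum_abs _ _
      _ ≤ ∑ i, B I (List.ofFn μ) i * RHS4 N u v t x := by
          refine Finset.sum_le_sum fun i _ => ?_
          refine tm_val_bound _ _ (hB0 I (List.ofFn μ) i) (hBb I (List.ofFn μ) i) N ?_ u v t hx1
          have hlen := (hok I (List.ofFn μ) i).2
          rw [List.length_ofFn] at hlen
          omega
      _ = (∑ i, B I (List.ofFn μ) i) * RHS4 N u v t x := (Finset.sum_mul _ _ _).symm
  have hstep : (∑ n ∈ Finset.range (N+1), ∑ μ : Fin n → Fin 7,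
      |Ziter (List.ofFn μ) (fun s y =>
          ∑ J, ∑ K, ∑ α, ∑ β, A I J K α β * pd α (comp u J) s y * pd β (comp v K) s y) t x|)
      ≤ (∑ n ∈ Finset.range (N+1), ∑ μ : Fin n → Fin 7,
          ∑ i, B I (List.ofFn μ) i) * RHS4 N u v t x := by
    rw [Finset.sum_mul]
    refine Finset.sum_le_sum fun n hn => ?_
    rw [Finset.sum_mul]
    exact Finset.sum_le_sum fun μ _ => hmain n hn μ
  refine hstep.trans ?_
  show _ ≤ C * RHS4 N u v t x
  refine mul_le_mul_of_nonneg_right ?_ (RHS4_nonneg N u v t x)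
  have hmono : (∑ n ∈ Finset.range (N+1), ∑ μ : Fin n → Fin 7, ∑ i, B I (List.ofFn μ) i)
      ≤ ∑ n ∈ Finset.range (N+1), ∑ μ : Fin n → Fin 7, ∑ I' : Fin M, ∑ i, B I' (List.ofFn μ) i := by
    refine Finset.sum_le_sum fun n _ => Finset.sum_le_sum fun μ _ => ?_
    exact Finset.single_le_sum
      (f := fun I' => ∑ i, B I' (List.ofFn μ) i)
      (fun I' _ => Finset.sum_nonneg fun i _ => hB0 _ _ _) (Finset.mem_univ I)
  rw [hC]
  linarith
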